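/- arXiv:1608.01579 — 3 statements merged into one kernel-verified Lean document; each statement's English description precedes it below -/
import Mathlib

section
/- The origin is the only critical point of the map F = (H, J) : R^4 → R^2 with H = q1 q2 − p1 p2 and J = (1/2)(q1^2 + p1^2) − (1/2)(q2^2 + p2^2) lying on the fiber F^{-1}(0,0); that is, if F(x) = (0,0) and the differential DF(x) has rank < 2, then x = 0. -/
private abbrev P : Fin 4 → ((Fin 4 → ℝ) →L[ℝ] ℝ) := fun i => ContinuousLinearMap.proj i

private noncomputable def Dmap (x : Fin 4 → ℝ) : Fin 2 → ((Fin 4 → ℝ) →L[ℝ] ℝ) := ![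
  (x 0 • P 2 + x 2 • P 0) - (x 1 • P 3 + x 3 • P 1),
  ((1/2 : ℝ) • ((x 0 • P 0 + x 0 • P 0) + (x 1 • P 1 + x 1 • P 1)))
    - ((1/2 : ℝ) • ((x 2 • P 2 + x 2 • P 2) + (x 3 • P 3 + x 3 • P 3)))]

private lemma D0 (x u : Fin 4 → ℝ) :
    ContinuousLinearMap.pi (Dmap x) u 0 = x 0 * u 2 + x 2 * u 0 - (x 1 * u 3 + x 3 * u 1) := by
  simp only [Dmap, ContinuousLinearMap.pi_apply, Matrix.cons_val_zero,
    ContinuousLinearMap.sub_apply, ContinuousLinearMap.add_apply,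
    ContinuousLinearMap.smul_apply, ContinuousLinearMap.proj_apply, smul_eq_mul]

private lemma D1 (x u : Fin 4 → ℝ) :
    ContinuousLinearMap.pi (Dmap x) u 1 =
      (1/2) * ((x 0 * u 0 + x 0 * u 0) + (x 1 * u 1 + x 1 * u 1))
        - (1/2) * ((x 2 * u 2 + x 2 * u 2) + (x 3 * u 3 + x 3 * u 3)) := by
  simp only [Dmap, ContinuousLinearMap.pi_apply, Matrix.cons_val_one, Matrix.head_cons,
    Matrix.cons_val_zero, ContinuousLinearMap.sub_apply, ContinuousLinearMap.add_apply,
    ContinuousLinearMap.smul_apply, ContinuousLinearMap.proj_apply, smul_eq_mul]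

private lemma hasFDeriv_aux (F : (Fin 4 → ℝ) → (Fin 2 → ℝ))
    (hF : ∀ x, F x = ![x 0 * x 2 - x 1 * x 3,
      (1/2) * ((x 0)^2 + (x 1)^2) - (1/2) * ((x 2)^2 + (x 3)^2)])
    (x : Fin 4 → ℝ) :
    HasFDerivAt F (ContinuousLinearMap.pi (Dmap x)) x := by
  have h0 : HasFDerivAt (fun y : Fin 4 → ℝ => F y 0)
      ((x 0 • P 2 + x 2 • P 0) - (x 1 • P 3 + x 3 • P 1)) x := by
    have : (fun y : Fin 4 → ℝ => F y 0) = fun y => y 0 * y 2 - y 1 * y 3 := by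
      funext y; rw [hF]; simp
    rw [this]
    exact ((hasFDerivAt_apply 0 x).mul (hasFDerivAt_apply 2 x)).sub
      ((hasFDerivAt_apply 1 x).mul (hasFDerivAt_apply 3 x))
  have h1 : HasFDerivAt (fun y : Fin 4 → ℝ => F y 1)
      (((1/2 : ℝ) • ((x 0 • P 0 + x 0 • P 0) + (x 1 • P 1 + x 1 • P 1)))
        - ((1/2 : ℝ) • ((x 2 • P 2 + x 2 • P 2) + (x 3 • P 3 + x 3 • P 3)))) x := by
    have : (fun y : Fin 4 → ℝ => F y 1)
        = fun y => (1/2 : ℝ) * (y 0 * y 0 + y 1 * y 1)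
            - (1/2 : ℝ) * (y 2 * y 2 + y 3 * y 3) := by
      funext y; rw [hF]; simp; ring
    rw [this]
    exact ((((hasFDerivAt_apply 0 x).mul (hasFDerivAt_apply 0 x)).add
        ((hasFDerivAt_apply 1 x).mul (hasFDerivAt_apply 1 x))).const_mul (1/2 : ℝ)).sub
      ((((hasFDerivAt_apply 2 x).mul (hasFDerivAt_apply 2 x)).add
        ((hasFDerivAt_apply 3 x).mul (hasFDerivAt_apply 3 x))).const_mul (1/2 : ℝ))
  refine (hasFDerivAt_pi (φ := fun i (y : Fin 4 → ℝ) => F y i)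
      (φ' := Dmap x) (x := x)).mpr ?_
  intro i
  fin_cases i
  · simpa [Dmap] using h0
  · simpa [Dmap] using h1

private lemma surj_aux (x : Fin 4 → ℝ) (hx : x ≠ 0) :
    Function.Surjective (ContinuousLinearMap.pi (Dmap x)) := by
  have hS : x 0 ^ 2 + x 1 ^ 2 + x 2 ^ 2 + x 3 ^ 2 ≠ 0 := by
    intro h
    apply hx
    have e0 : x 0 = 0 := by nlinarith [sq_nonneg (x 0), sq_nonneg (x 1), sq_nonneg (x 2), sq_nonneg (x 3)]
    have e1 : x 1 = 0 := by nlinarith [sq_nonneg (x 0), sq_nonneg (x 1), sq_nonneg (x 2), sq_nonneg (x 3)]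
    have e2 : x 2 = 0 := by nlinarith [sq_nonneg (x 0), sq_nonneg (x 1), sq_nonneg (x 2), sq_nonneg (x 3)]
    have e3 : x 3 = 0 := by nlinarith [sq_nonneg (x 0), sq_nonneg (x 1), sq_nonneg (x 2), sq_nonneg (x 3)]
    funext i
    fin_cases i
    · exact e0
    · exact e1
    · exact e2
    · exact e3
  intro y
  set S : ℝ := x 0 ^ 2 + x 1 ^ 2 + x 2 ^ 2 + x 3 ^ 2 with hSdef
  refine ⟨![(y 0 * x 2 + y 1 * x 0) / S, (-(y 0 * x 3) + y 1 * x 1) / S,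
    (y 0 * x 0 - y 1 * x 2) / S, (-(y 0 * x 1) - y 1 * x 3) / S], ?_⟩
  funext i
  fin_cases i
  · show ContinuousLinearMap.pi (Dmap x) _ 0 = y 0
    rw [D0]
    simp only [Matrix.cons_val_zero, Matrix.cons_val_one, Matrix.head_cons,
      Matrix.cons_val_two, Matrix.tail_cons, Matrix.cons_val_three]
    field_simp
    ring
  · show ContinuousLinearMap.pi (Dmap x) _ 1 = y 1
    rw [D1]
    simp only [Matrix.cons_val_zero, Matrix.cons_val_one, Matrix.head_cons,
      Matrix.cons_val_two, Matrix.tail_cons, Matrix.cons_val_three]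
    field_simp
    ring



open Cardinal in
/-- The origin is the only critical point of F = (H, J),
H = q1 q2 − p1 p2, J = ½(q1²+p1²) − ½(q2²+p2²), on the fiber F⁻¹(0,0):
if F x = (0,0) and rank DF(x) < 2 then x = 0.
Coordinates on ℝ⁴ are (q1, p1, q2, p2) = (x 0, x 1, x 2, x 3). -/
theorem focus_focus_origin_only_critical_point
    (F : (Fin 4 → ℝ) → (Fin 2 → ℝ))
    (hF : ∀ x, F x = ![x 0 * x 2 - x 1 * x 3,
      (1/2) * ((x 0)^2 + (x 1)^2) - (1/2) * ((x 2)^2 + (x 3)^2)])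
    (x : Fin 4 → ℝ) (hfib : F x = 0)
    (hrank : LinearMap.rank (fderiv ℝ F x).toLinearMap < 2) :
    x = 0 := by
  by_contra hx
  have hfd : fderiv ℝ F x = ContinuousLinearMap.pi (Dmap x) :=
    (hasFDeriv_aux F hF x).fderiv
  have hs : Function.Surjective (ContinuousLinearMap.pi (Dmap x)).toLinearMap :=
    surj_aux x hx
  have hrank2 : LinearMap.rank (fderiv ℝ F x).toLinearMap = 2 := by
    rw [hfd]
    have h2 : LinearMap.rank (ContinuousLinearMap.pi (Dmap x)).toLinearMap
        = Module.rank ℝ (Fin 2 → ℝ) := rank_range_of_surjective _ hs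
    rw [h2, rank_fin_fun 2]
    norm_num
  rw [hrank2] at hrank
  exact lt_irrefl _ hrank
end

section
/- Every point (h, j) ∈ R^2 with (h, j) ≠ (0, 0) is a regular value of the map F = (H, J) : R^4 → R^2 with H = q1 q2 − p1 p2 and J = (1/2)(q1^2 + p1^2) − (1/2)(q2^2 + p2^2); i.e., at every point x ∈ F^{-1}(h,j) the differential DF(x) has rank 2. -/
set_option maxHeartbeats 400000

noncomputable abbrev pr (i : Fin 4) : (Fin 4 → ℝ) →L[ℝ] ℝ := ContinuousLinearMap.proj i

/-- Every (h, j) ≠ (0,0) is a regular value of F = (H, J),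
H = q1 q2 − p1 p2, J = ½(q1²+p1²) − ½(q2²+p2²): at every preimage point the
differential DF(x) is surjective (has rank 2).
Coordinates on ℝ⁴ are (q1, p1, q2, p2) = (x 0, x 1, x 2, x 3). -/
theorem focus_focus_regular_values
    (F : (Fin 4 → ℝ) → (Fin 2 → ℝ))
    (hF : ∀ x, F x = ![x 0 * x 2 - x 1 * x 3,
      (1/2) * ((x 0)^2 + (x 1)^2) - (1/2) * ((x 2)^2 + (x 3)^2)])
    (v : Fin 2 → ℝ) (hv : v ≠ 0) :
    ∀ x : Fin 4 → ℝ, F x = v → Function.Surjective (fderiv ℝ F x) := by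
  intro x hx
  -- component derivatives
  have hs : ∀ i : Fin 4, HasFDerivAt (fun y : Fin 4 → ℝ => (y i)^2) ((2 * x i) • pr i) x := by
    intro i
    have h := ((pr i).hasFDerivAt (x := x)).mul ((pr i).hasFDerivAt (x := x))
    simp only [ContinuousLinearMap.proj_apply] at h
    rw [show (fun y : Fin 4 → ℝ => (y i)^2) = fun y => y i * y i from funext fun y => sq (y i),
      two_mul, add_smul]
    exact h
  set D0 : (Fin 4 → ℝ) →L[ℝ] ℝ :=
    (x 0 • pr 2 + x 2 • pr 0) - (x 1 • pr 3 + x 3 • pr 1) with hD0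
  set D1 : (Fin 4 → ℝ) →L[ℝ] ℝ :=
    ((1/2:ℝ) • ((2 * x 0) • pr 0 + (2 * x 1) • pr 1)) -
      ((1/2:ℝ) • ((2 * x 2) • pr 2 + (2 * x 3) • pr 3)) with hD1
  have h0 : HasFDerivAt (fun y : Fin 4 → ℝ => y 0 * y 2 - y 1 * y 3) D0 x := by
    have h := (((pr 0).hasFDerivAt (x := x)).mul ((pr 2).hasFDerivAt (x := x))).sub
      (((pr 1).hasFDerivAt (x := x)).mul ((pr 3).hasFDerivAt (x := x)))
    exact h
  have h1 : HasFDerivAt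
      (fun y : Fin 4 → ℝ => (1/2) * ((y 0)^2 + (y 1)^2) - (1/2) * ((y 2)^2 + (y 3)^2)) D1 x :=
    (((hs 0).add (hs 1)).const_mul (1/2)).sub (((hs 2).add (hs 3)).const_mul (1/2))
  have hL : HasFDerivAt F (ContinuousLinearMap.pi ![D0, D1]) x := by
    have hFe : F = fun y i => (![fun y : Fin 4 → ℝ => y 0 * y 2 - y 1 * y 3,
        fun y => (1/2) * ((y 0)^2 + (y 1)^2) - (1/2) * ((y 2)^2 + (y 3)^2)] : Fin 2 → _) i y := by
      funext y i
      rw [hF y]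
      fin_cases i <;> simp
    rw [hFe]
    exact hasFDerivAt_pi.2 (by
      intro i
      fin_cases i
      · simpa using h0
      · simpa using h1)
  rw [hL.fderiv]
  -- x ≠ 0
  set N : ℝ := (x 0)^2 + (x 1)^2 + (x 2)^2 + (x 3)^2 with hNdef
  have hN : N ≠ 0 := by
    intro h
    rw [hNdef] at h
    have s0 := sq_nonneg (x 0); have s1 := sq_nonneg (x 1)
    have s2 := sq_nonneg (x 2); have s3 := sq_nonneg (x 3)
    have e0 : x 0 = 0 := pow_eq_zero_iff two_ne_zero |>.1 (by linarith)
    have e1 : x 1 = 0 := pow_eq_zero_iff two_ne_zero |>.1 (by linarith)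
    have e2 : x 2 = 0 := pow_eq_zero_iff two_ne_zero |>.1 (by linarith)
    have e3 : x 3 = 0 := pow_eq_zero_iff two_ne_zero |>.1 (by linarith)
    apply hv
    rw [← hx, hF x]
    funext i
    fin_cases i <;> simp [e0, e1, e2, e3]
  intro t
  refine ⟨(t 0 / N) • ![x 2, -(x 3), x 0, -(x 1)] + (t 1 / N) • ![x 0, x 1, -(x 2), -(x 3)], ?_⟩
  funext i
  fin_cases i <;>
  · simp only [ContinuousLinearMap.pi_apply, Matrix.cons_val_zero, Matrix.cons_val_one,
      Matrix.head_cons, hD0, hD1, ContinuousLinearMap.sub_apply, ContinuousLinearMap.add_apply,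
      ContinuousLinearMap.smul_apply, ContinuousLinearMap.proj_apply, Pi.add_apply,
      Pi.smul_apply, smul_eq_mul, Matrix.cons_val_two, Matrix.cons_val_three, Matrix.tail_cons,
      Fin.isValue, Fin.zero_eta, Fin.mk_one]
    field_simp
    ring
end

section
/- Let B ⊂ R^4 ≅ C^2 be an open ball around a fixed point of the circle action t·(z,w) = (e^{it} z, e^{it} w), and suppose ϑ is a smooth closed 1-form defined on B minus a closed set Π (the polar set), invariant under the action, with ϑ(X) = 1 where X is the generator of the action. If p ∈ B \ Π is not the fixed point, then the integral of ϑ over the circle orbit through p equals 2π, and consequently the orbit through p is not null-homotopic in B \ Π; in particular Π cannot be empty. -/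
open Complex Real

/-- The rotation by angle t of a point of ℂ², for the diagonal circle action. -/
noncomputable def rotC2 (t : ℝ) (x : ℂ × ℂ) : ℂ × ℂ :=
  (Complex.exp (t * Complex.I) * x.1, Complex.exp (t * Complex.I) * x.2)

/-- The infinitesimal generator X of the action t·(z,w) = (e^{it}z, e^{it}w). -/
noncomputable def genC2 (x : ℂ × ℂ) : ℂ × ℂ := (Complex.I * x.1, Complex.I * x.2)

open MeasureTheory Set

lemma ruled_hasFDerivAt {α β α' β' : ℝ → ℂ × ℂ}
    (hα : ∀ t, HasDerivAt α (α' t) t) (hβ : ∀ t, HasDerivAt β (β' t) t) (q : ℝ × ℝ) :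
    HasFDerivAt (fun q : ℝ × ℝ => α q.1 + q.2 • β q.1)
      ((ContinuousLinearMap.fst ℝ ℝ ℝ).smulRight (α' q.1 + q.2 • β' q.1)
        + (ContinuousLinearMap.snd ℝ ℝ ℝ).smulRight (β q.1)) q := by
  have h1 : HasFDerivAt (fun q : ℝ × ℝ => α q.1)
      (((1 : ℝ →L[ℝ] ℝ).smulRight (α' q.1)).comp (ContinuousLinearMap.fst ℝ ℝ ℝ)) q :=
    (hα q.1).hasFDerivAt.comp q hasFDerivAt_fst
  have h2 : HasFDerivAt (fun q : ℝ × ℝ => β q.1)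
      (((1 : ℝ →L[ℝ] ℝ).smulRight (β' q.1)).comp (ContinuousLinearMap.fst ℝ ℝ ℝ)) q :=
    (hβ q.1).hasFDerivAt.comp q hasFDerivAt_fst
  have h4 := (hasFDerivAt_snd (𝕜 := ℝ) (E := ℝ) (F := ℝ) (p := q)).smul h2
  have h5 := h1.add h4
  refine h5.congr_fderiv ?_
  refine ContinuousLinearMap.ext fun v => ?_
  simp [ContinuousLinearMap.comp_apply, ContinuousLinearMap.add_apply,
    ContinuousLinearMap.smul_apply, ContinuousLinearMap.smulRight_apply, smul_add]
  rw [smul_comm]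
  abel
lemma green_ruled (U : Set (ℂ × ℂ)) (hUo : IsOpen U)
    (ϑ : (ℂ × ℂ) → (ℂ × ℂ) →L[ℝ] ℝ) (hdiff : DifferentiableOn ℝ ϑ U)
    (hsym : ∀ x ∈ U, ∀ v w : ℂ × ℂ, fderiv ℝ ϑ x v w = fderiv ℝ ϑ x w v)
    (α β α' β' α'' β'' : ℝ → ℂ × ℂ)
    (hα : ∀ t, HasDerivAt α (α' t) t) (hβ : ∀ t, HasDerivAt β (β' t) t)
    (hα' : ∀ t, HasDerivAt α' (α'' t) t) (hβ' : ∀ t, HasDerivAt β' (β'' t) t)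
    (hmem : ∀ q : ℝ × ℝ, q ∈ Icc (0:ℝ) 1 ×ˢ Icc (0:ℝ) 1 → α q.1 + q.2 • β q.1 ∈ U) :
    (∫ t in (0:ℝ)..1, ϑ (α t) (α' t)) + (∫ s in (0:ℝ)..1, ϑ (α 1 + s • β 1) (β 1))
      = (∫ t in (0:ℝ)..1, ϑ (α t + β t) (α' t + β' t))
        + ∫ s in (0:ℝ)..1, ϑ (α 0 + s • β 0) (β 0) := by
  have h01 : (Set.uIcc (0:ℝ) 1 : Set ℝ) = Icc 0 1 := uIcc_of_le zero_le_one
  -- continuity of the data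
  have hαc : Continuous α := continuous_iff_continuousAt.2 fun t => (hα t).continuousAt
  have hβc : Continuous β := continuous_iff_continuousAt.2 fun t => (hβ t).continuousAt
  have hα'c : Continuous α' := continuous_iff_continuousAt.2 fun t => (hα' t).continuousAt
  have hβ'c : Continuous β' := continuous_iff_continuousAt.2 fun t => (hβ' t).continuousAt
  have hΦc : Continuous (fun q : ℝ × ℝ => α q.1 + q.2 • β q.1) :=
    ((hαc.comp continuous_fst).add (continuous_snd.smul (hβc.comp continuous_fst)))
  have hw1c : Continuous (fun q : ℝ × ℝ => α' q.1 + q.2 • β' q.1) :=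
    ((hα'c.comp continuous_fst).add (continuous_snd.smul (hβ'c.comp continuous_fst)))
  set f : ℝ × ℝ → ℝ := fun q => ϑ (α q.1 + q.2 • β q.1) (β q.1) with hfdef
  set g : ℝ × ℝ → ℝ := fun q => -(ϑ (α q.1 + q.2 • β q.1) (α' q.1 + q.2 • β' q.1)) with hgdef
  set Dq : ℝ × ℝ → (ℝ × ℝ) →L[ℝ] ℂ × ℂ := fun q =>
      (ContinuousLinearMap.fst ℝ ℝ ℝ).smulRight (α' q.1 + q.2 • β' q.1)
        + (ContinuousLinearMap.snd ℝ ℝ ℝ).smulRight (β q.1) with hDqdef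
  set Wq : ℝ × ℝ → (ℝ × ℝ) →L[ℝ] ℂ × ℂ := fun q =>
      (ContinuousLinearMap.fst ℝ ℝ ℝ).smulRight (α'' q.1 + q.2 • β'' q.1)
        + (ContinuousLinearMap.snd ℝ ℝ ℝ).smulRight (β' q.1) with hWqdef
  set f' : ℝ × ℝ → (ℝ × ℝ) →L[ℝ] ℝ := fun q =>
      (ϑ (α q.1 + q.2 • β q.1)).comp
          (((1 : ℝ →L[ℝ] ℝ).smulRight (β' q.1)).comp (ContinuousLinearMap.fst ℝ ℝ ℝ))
        + ((fderiv ℝ ϑ (α q.1 + q.2 • β q.1)).comp (Dq q)).flip (β q.1) with hf'def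
  set g' : ℝ × ℝ → (ℝ × ℝ) →L[ℝ] ℝ := fun q =>
      -((ϑ (α q.1 + q.2 • β q.1)).comp (Wq q)
        + ((fderiv ℝ ϑ (α q.1 + q.2 • β q.1)).comp (Dq q)).flip (α' q.1 + q.2 • β' q.1))
      with hg'def
  have hmem' : ∀ q : ℝ × ℝ, q ∈ Ioo (0:ℝ) 1 ×ˢ Ioo (0:ℝ) 1 → α q.1 + q.2 • β q.1 ∈ U :=
    fun q hq => hmem q ⟨Ioo_subset_Icc_self hq.1, Ioo_subset_Icc_self hq.2⟩
  -- differentiability at interior points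
  have Hdf : ∀ q ∈ Ioo (0:ℝ) 1 ×ˢ Ioo (0:ℝ) 1, HasFDerivAt f (f' q) q := by
    intro q hq
    have hϑat : DifferentiableAt ℝ ϑ (α q.1 + q.2 • β q.1) :=
      hdiff.differentiableAt (hUo.mem_nhds (hmem' q hq))
    have hc : HasFDerivAt (fun q : ℝ × ℝ => ϑ (α q.1 + q.2 • β q.1))
        ((fderiv ℝ ϑ (α q.1 + q.2 • β q.1)).comp (Dq q)) q :=
      hϑat.hasFDerivAt.comp q (ruled_hasFDerivAt hα hβ q)
    have hu : HasFDerivAt (fun q : ℝ × ℝ => β q.1)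
        (((1 : ℝ →L[ℝ] ℝ).smulRight (β' q.1)).comp (ContinuousLinearMap.fst ℝ ℝ ℝ)) q :=
      (hβ q.1).hasFDerivAt.comp q hasFDerivAt_fst
    exact hc.clm_apply hu
  have Hdg : ∀ q ∈ Ioo (0:ℝ) 1 ×ˢ Ioo (0:ℝ) 1, HasFDerivAt g (g' q) q := by
    intro q hq
    have hϑat : DifferentiableAt ℝ ϑ (α q.1 + q.2 • β q.1) :=
      hdiff.differentiableAt (hUo.mem_nhds (hmem' q hq))
    have hc : HasFDerivAt (fun q : ℝ × ℝ => ϑ (α q.1 + q.2 • β q.1))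
        ((fderiv ℝ ϑ (α q.1 + q.2 • β q.1)).comp (Dq q)) q :=
      hϑat.hasFDerivAt.comp q (ruled_hasFDerivAt hα hβ q)
    exact (hc.clm_apply (ruled_hasFDerivAt hα' hβ' q)).neg
  -- the divergence vanishes on the interior
  have Hdiv0 : ∀ q ∈ Ioo (0:ℝ) 1 ×ˢ Ioo (0:ℝ) 1, f' q (1, 0) + g' q (0, 1) = 0 := by
    intro q hq
    simp only [hf'def, hg'def, hDqdef, hWqdef, ContinuousLinearMap.add_apply,
      ContinuousLinearMap.comp_apply, ContinuousLinearMap.flip_apply,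
      ContinuousLinearMap.smulRight_apply, ContinuousLinearMap.coe_fst',
      ContinuousLinearMap.coe_snd', ContinuousLinearMap.one_apply,
      ContinuousLinearMap.neg_apply, one_smul, zero_smul, smul_zero, add_zero, zero_add]
    rw [hsym _ (hmem' q hq)]
    ring

  -- continuity on the closed square
  have hrect : Set.uIcc (0:ℝ) 1 ×ˢ Set.uIcc (0:ℝ) 1 = Icc (0:ℝ) 1 ×ˢ Icc (0:ℝ) 1 := by
    rw [h01]
  have hϑcont : ContinuousOn (fun q : ℝ × ℝ => ϑ (α q.1 + q.2 • β q.1))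
      (Icc (0:ℝ) 1 ×ˢ Icc (0:ℝ) 1) :=
    (hdiff.continuousOn).comp hΦc.continuousOn (fun q hq => hmem q hq)
  have Hcf : ContinuousOn f (Set.uIcc (0:ℝ) 1 ×ˢ Set.uIcc (0:ℝ) 1) := by
    rw [hrect]
    exact hϑcont.clm_apply ((hβc.comp continuous_fst).continuousOn)
  have Hcg : ContinuousOn g (Set.uIcc (0:ℝ) 1 ×ˢ Set.uIcc (0:ℝ) 1) := by
    rw [hrect]
    exact (hϑcont.clm_apply (hw1c.continuousOn)).neg
  -- the boundary of the square is null
  have h2fin : (({0, 1} : Set ℝ)).Finite := (finite_singleton 1).insert 0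
  have hnull : volume ((Icc (0:ℝ) 1 ×ˢ Icc (0:ℝ) 1) \ (Ioo (0:ℝ) 1 ×ˢ Ioo (0:ℝ) 1)) = 0 := by
    have hsub : (Icc (0:ℝ) 1 ×ˢ Icc (0:ℝ) 1) \ (Ioo (0:ℝ) 1 ×ˢ Ioo (0:ℝ) 1) ⊆
        (({0, 1} : Set ℝ) ×ˢ (univ : Set ℝ)) ∪ ((univ : Set ℝ) ×ˢ ({0, 1} : Set ℝ)) := by
      rintro ⟨x, y⟩ ⟨⟨hx, hy⟩, hn⟩
      simp only [mem_prod] at hn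
      by_cases hxI : x ∈ Ioo (0:ℝ) 1
      · have hyI : y ∉ Ioo (0:ℝ) 1 := fun h => hn ⟨hxI, h⟩
        simp only [mem_Ioo, not_and_or, not_lt] at hyI
        right
        refine ⟨mem_univ _, ?_⟩
        simp only [mem_Icc] at hy
        rcases hyI with h | h
        · simp [le_antisymm h hy.1]
        · simp [le_antisymm hy.2 h]
      · simp only [mem_Ioo, not_and_or, not_lt] at hxI
        left
        refine ⟨?_, mem_univ _⟩
        simp only [mem_Icc] at hx
        rcases hxI with h | h
        · simp [le_antisymm h hx.1]
        · simp [le_antisymm hx.2 h]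
    refine measure_mono_null hsub (measure_union_null ?_ ?_)
    · rw [Measure.volume_eq_prod, Measure.prod_prod, h2fin.measure_zero, zero_mul]
    · rw [Measure.volume_eq_prod, Measure.prod_prod, h2fin.measure_zero, mul_zero]
  -- a.e. point of the closed square is interior
  have hae : ∀ᵐ q ∂(volume.restrict (Icc (0:ℝ) 1 ×ˢ Icc (0:ℝ) 1)),
      q ∈ Ioo (0:ℝ) 1 ×ˢ Ioo (0:ℝ) 1 := by
    rw [ae_iff]
    have hset : {a : ℝ × ℝ | a ∉ Ioo (0:ℝ) 1 ×ˢ Ioo (0:ℝ) 1} = (Ioo (0:ℝ) 1 ×ˢ Ioo (0:ℝ) 1)ᶜ := rfl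
    rw [hset, Measure.restrict_apply ((measurableSet_Ioo.prod measurableSet_Ioo).compl)]
    refine measure_mono_null (fun q hq => ?_) hnull
    exact ⟨hq.2, hq.1⟩
  have Hi : IntegrableOn (fun q : ℝ × ℝ => f' q (1, 0) + g' q (0, 1))
      (Set.uIcc (0:ℝ) 1 ×ˢ Set.uIcc (0:ℝ) 1) := by
    rw [hrect]
    refine (integrable_zero _ _ _).congr ?_
    filter_upwards [hae] with q hq
    exact (Hdiv0 q hq).symm
  -- the interval-integral of the divergence vanishes
  have hae1 : ∀ᵐ x : ℝ, x ∉ ({0, 1} : Set ℝ) :=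
    measure_eq_zero_iff_ae_notMem.mp (h2fin.measure_zero _)
  have hL : (∫ x in (0:ℝ)..1, ∫ y in (0:ℝ)..1, f' (x, y) (1, 0) + g' (x, y) (0, 1)) = 0 := by
    have hinner : ∀ x ∈ Ioo (0:ℝ) 1,
        (∫ y in (0:ℝ)..1, f' (x, y) (1, 0) + g' (x, y) (0, 1)) = 0 := by
      intro x hx
      have hcg : ∀ᵐ y : ℝ, y ∈ Set.uIoc (0:ℝ) 1 → (f' (x, y) (1, 0) + g' (x, y) (0, 1)) = (0:ℝ) := by
        filter_upwards [hae1] with y hy hyI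
        rw [uIoc_of_le zero_le_one] at hyI
        have : y ∈ Ioo (0:ℝ) 1 := ⟨hyI.1, lt_of_le_of_ne hyI.2 (by simpa using fun h => hy (by simp [h]))⟩
        exact Hdiv0 (x, y) ⟨hx, this⟩
      rw [intervalIntegral.integral_congr_ae hcg, intervalIntegral.integral_zero]
    have hcg : ∀ᵐ x : ℝ, x ∈ Set.uIoc (0:ℝ) 1 →
        (∫ y in (0:ℝ)..1, f' (x, y) (1, 0) + g' (x, y) (0, 1)) = (0:ℝ) := by
      filter_upwards [hae1] with x hx hxI
      rw [uIoc_of_le zero_le_one] at hxI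
      exact hinner x ⟨hxI.1, lt_of_le_of_ne hxI.2 (by simpa using fun h => hx (by simp [h]))⟩
    rw [intervalIntegral.integral_congr_ae hcg, intervalIntegral.integral_zero]
  -- Green's theorem
  have hdt := MeasureTheory.integral2_divergence_prod_of_hasFDerivAt_off_countable
      f g f' g' 0 0 1 1 ∅ countable_empty Hcf Hcg
      (by intro x hx; rw [min_eq_left zero_le_one, max_eq_right zero_le_one, diff_empty] at hx
          exact Hdf x hx)
      (by intro x hx; rw [min_eq_left zero_le_one, max_eq_right zero_le_one, diff_empty] at hx
          exact Hdg x hx) Hi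
  rw [hL] at hdt
  -- unravel the boundary integrals
  have e1 : (∫ x in (0:ℝ)..1, g (x, 1)) = -(∫ t in (0:ℝ)..1, ϑ (α t + β t) (α' t + β' t)) := by
    rw [← intervalIntegral.integral_neg]
    refine intervalIntegral.integral_congr fun t _ => ?_
    simp [hgdef]
  have e2 : (∫ x in (0:ℝ)..1, g (x, 0)) = -(∫ t in (0:ℝ)..1, ϑ (α t) (α' t)) := by
    rw [← intervalIntegral.integral_neg]
    refine intervalIntegral.integral_congr fun t _ => ?_
    simp [hgdef]
  have e3 : (∫ y in (0:ℝ)..1, f (1, y)) = ∫ s in (0:ℝ)..1, ϑ (α 1 + s • β 1) (β 1) := by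
    refine intervalIntegral.integral_congr fun t _ => ?_
    simp [hfdef]
  have e4 : (∫ y in (0:ℝ)..1, f (0, y)) = ∫ s in (0:ℝ)..1, ϑ (α 0 + s • β 0) (β 0) := by
    refine intervalIntegral.integral_congr fun t _ => ?_
    simp [hfdef]
  rw [e1, e2, e3, e4] at hdt
  linarith
noncomputable def segInt (ϑ : (ℂ × ℂ) → (ℂ × ℂ) →L[ℝ] ℝ) (a b : ℂ × ℂ) : ℝ :=
  ∫ t in (0:ℝ)..1, ϑ (a + t • (b - a)) (b - a)

lemma segInt_self (ϑ : (ℂ × ℂ) → (ℂ × ℂ) →L[ℝ] ℝ) (a : ℂ × ℂ) : segInt ϑ a a = 0 := by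
  simp [segInt]

lemma affine_hasDerivAt (a v : ℂ × ℂ) (t : ℝ) :
    HasDerivAt (fun t : ℝ => a + t • v) v t := by
  simpa using ((hasDerivAt_id t).smul_const v).const_add a
lemma segInt_square (U : Set (ℂ × ℂ)) (hUo : IsOpen U)
    (ϑ : (ℂ × ℂ) → (ℂ × ℂ) →L[ℝ] ℝ) (hdiff : DifferentiableOn ℝ ϑ U)
    (hsym : ∀ x ∈ U, ∀ v w : ℂ × ℂ, fderiv ℝ ϑ x v w = fderiv ℝ ϑ x w v)
    {C : Set (ℂ × ℂ)} (hC : Convex ℝ C) (hCU : C ⊆ U) {a b c d : ℂ × ℂ}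
    (ha : a ∈ C) (hb : b ∈ C) (hc : c ∈ C) (hd : d ∈ C) :
    segInt ϑ a c + segInt ϑ c d = segInt ϑ a b + segInt ϑ b d := by
  have key := green_ruled U hUo ϑ hdiff hsym
    (fun t => a + t • (c - a)) (fun t => (b - a) + t • ((d - c) - (b - a)))
    (fun _ => c - a) (fun _ => (d - c) - (b - a)) (fun _ => 0) (fun _ => 0)
    (fun t => affine_hasDerivAt a (c - a) t) (fun t => affine_hasDerivAt (b - a) _ t)
    (fun t => hasDerivAt_const t _) (fun t => hasDerivAt_const t _) ?hmem
  case hmem =>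
    rintro ⟨t, s⟩ ⟨⟨ht0, ht1⟩, hs0, hs1⟩
    simp only [mem_Icc] at *
    have h1 : (1 - t) • a + t • c ∈ C := hC ha hc (by linarith) (by linarith) (by ring)
    have h2 : (1 - t) • b + t • d ∈ C := hC hb hd (by linarith) (by linarith) (by ring)
    have h3 : (1 - s) • ((1 - t) • a + t • c) + s • ((1 - t) • b + t • d) ∈ C :=
      hC h1 h2 (by linarith) (by linarith) (by ring)
    have heq : a + t • (c - a) + s • ((b - a) + t • ((d - c) - (b - a)))
        = (1 - s) • ((1 - t) • a + t • c) + s • ((1 - t) • b + t • d) := by module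
    rw [heq]
    exact hCU h3
  rw [show a + (1:ℝ) • (c - a) = c from by module,
      show (b - a) + (1:ℝ) • ((d - c) - (b - a)) = d - c from by module] at key
  simp only [zero_smul, add_zero] at key
  have htop : (fun t : ℝ => ϑ (a + t • (c - a) + ((b - a) + t • ((d - c) - (b - a))))
      ((c - a) + ((d - c) - (b - a)))) = fun t : ℝ => ϑ (b + t • (d - b)) (d - b) := by
    funext t
    rw [show a + t • (c - a) + ((b - a) + t • ((d - c) - (b - a))) = b + t • (d - b) from by
      module, show (c - a) + ((d - c) - (b - a)) = d - b from by module]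
  rw [htop] at key
  unfold segInt
  linarith [key]
lemma hasDerivAt_rot (p : ℂ × ℂ) (k m t : ℝ) :
    HasDerivAt (fun t => rotC2 (k*t + m) p) (k • genC2 (rotC2 (k*t + m) p)) t := by
  have harg : HasDerivAt (fun t : ℝ => ((k*t + m : ℝ) : ℂ) * Complex.I) ((k : ℂ) * Complex.I) t := by
    have : HasDerivAt (fun t : ℝ => k*t + m) k t := by
      simpa using ((hasDerivAt_id t).const_mul k).add_const m
    simpa using (this.ofReal_comp).mul_const Complex.I
  have hexp := harg.cexp
  have h := (hexp.mul_const p.1).prodMk (hexp.mul_const p.2)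
  show HasDerivAt (fun t : ℝ => (Complex.exp ((k*t + m : ℝ) * Complex.I) * p.1,
      Complex.exp ((k*t + m : ℝ) * Complex.I) * p.2)) _ t
  convert h using 1
  rw [Prod.ext_iff]
  constructor <;>
  · simp [genC2, rotC2, Complex.real_smul]
    ring

lemma gen_rot (p : ℂ × ℂ) (T : ℝ) : genC2 (rotC2 T p) = rotC2 T (genC2 p) := by
  simp only [genC2, rotC2]
  exact Prod.ext (by ring) (by ring)

lemma segInt_arc (U : Set (ℂ × ℂ)) (hUo : IsOpen U)
    (ϑ : (ℂ × ℂ) → (ℂ × ℂ) →L[ℝ] ℝ) (hdiff : DifferentiableOn ℝ ϑ U)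
    (hsym : ∀ x ∈ U, ∀ v w : ℂ × ℂ, fderiv ℝ ϑ x v w = fderiv ℝ ϑ x w v)
    (p : ℂ × ℂ) (hpair1 : ∀ T : ℝ, ϑ (rotC2 T p) (genC2 (rotC2 T p)) = 1)
    (k m : ℝ) {C : Set (ℂ × ℂ)} (hC : Convex ℝ C) (hCU : C ⊆ U)
    (hmemC : ∀ t ∈ Icc (0:ℝ) 1, rotC2 (k*t + m) p ∈ C) :
    segInt ϑ (rotC2 m p) (rotC2 (k + m) p) = k := by
  set v0 := rotC2 m p with hv0
  set v1 := rotC2 (k + m) p with hv1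
  have hα : ∀ t, HasDerivAt (fun t => rotC2 (k*t + m) p)
      (k • rotC2 (k*t + m) (genC2 p)) t := by
    intro t; rw [← gen_rot]; exact hasDerivAt_rot p k m t
  have hα' : ∀ t, HasDerivAt (fun t => k • rotC2 (k*t + m) (genC2 p))
      (k • (k • rotC2 (k*t + m) (genC2 (genC2 p)))) t := by
    intro t
    rw [← gen_rot]
    exact (hasDerivAt_rot (genC2 p) k m t).const_smul k
  have hβ : ∀ t, HasDerivAt
      (fun t => (v0 + t • (v1 - v0)) - rotC2 (k*t + m) p)
      ((v1 - v0) - k • rotC2 (k*t + m) (genC2 p)) t :=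
    fun t => (affine_hasDerivAt v0 (v1 - v0) t).sub (hα t)
  have hβ' : ∀ t, HasDerivAt
      (fun t => (v1 - v0) - k • rotC2 (k*t + m) (genC2 p))
      (0 - k • (k • rotC2 (k*t + m) (genC2 (genC2 p)))) t :=
    fun t => (hasDerivAt_const t _).sub (hα' t)
  have key := green_ruled U hUo ϑ hdiff hsym
    (fun t => rotC2 (k*t + m) p)
    (fun t => (v0 + t • (v1 - v0)) - rotC2 (k*t + m) p)
    (fun t => k • rotC2 (k*t + m) (genC2 p))
    (fun t => (v1 - v0) - k • rotC2 (k*t + m) (genC2 p))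
    (fun t => k • (k • rotC2 (k*t + m) (genC2 (genC2 p))))
    (fun t => 0 - k • (k • rotC2 (k*t + m) (genC2 (genC2 p))))
    hα hβ hα' hβ' ?hmem
  case hmem =>
    rintro ⟨t, s⟩ ⟨ht, hs⟩
    simp only [mem_Icc] at ht hs
    have h1 : rotC2 (k*t + m) p ∈ C := hmemC t (by simp [mem_Icc, ht.1, ht.2])
    have h2 : v0 ∈ C := by
      have := hmemC 0 (by norm_num [mem_Icc])
      simpa [hv0] using this
    have h3 : v1 ∈ C := by
      have := hmemC 1 (by norm_num [mem_Icc])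
      rw [hv1]
      convert this using 2
      ring
    have h4 : (1 - t) • v0 + t • v1 ∈ C := hC h2 h3 (by linarith [hs.1, ht.1]) ht.1 (by ring)
    have heq : rotC2 (k*t + m) p + s • ((v0 + t • (v1 - v0)) - rotC2 (k*t + m) p)
        = (1 - s) • rotC2 (k*t + m) p + s • ((1 - t) • v0 + t • v1) := by module
    rw [heq]
    exact hCU (hC h1 h4 (by linarith [hs.2]) hs.1 (by ring))
  -- simplify the four edges
  -- bottom edge = k
  have hbot : (∫ t in (0:ℝ)..1, ϑ (rotC2 (k*t + m) p) (k • rotC2 (k*t + m) (genC2 p))) = k := by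
    have : ∀ t : ℝ, ϑ (rotC2 (k*t + m) p) (k • rotC2 (k*t + m) (genC2 p)) = k := by
      intro t
      rw [← gen_rot, ContinuousLinearMap.map_smul, hpair1 (k*t + m), smul_eq_mul, mul_one]
    rw [intervalIntegral.integral_congr (g := fun _ => k) (fun t _ => this t)]
    simp
  -- β 1 = 0 and β 0 = 0
  have hb1 : (v0 + (1:ℝ) • (v1 - v0)) - rotC2 (k*1 + m) p = 0 := by
    rw [show k*1 + m = k + m from by ring, ← hv1]
    module
  have hb0 : (v0 + (0:ℝ) • (v1 - v0)) - rotC2 (k*0 + m) p = 0 := by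
    rw [show k*0 + m = m from by ring, ← hv0]
    module
  rw [hb1, hb0] at key
  simp only [map_zero, intervalIntegral.integral_zero, add_zero, intervalIntegral.integral_const,
    smul_eq_mul] at key
  rw [hbot] at key
  -- top edge is segInt v0 v1
  have htop : (fun t : ℝ => ϑ (rotC2 (k*t + m) p + ((v0 + t • (v1 - v0)) - rotC2 (k*t + m) p))
      ((k • rotC2 (k*t + m) (genC2 p)) + ((v1 - v0) - k • rotC2 (k*t + m) (genC2 p))))
      = fun t : ℝ => ϑ (v0 + t • (v1 - v0)) (v1 - v0) := by
    funext t
    rw [show rotC2 (k*t + m) p + ((v0 + t • (v1 - v0)) - rotC2 (k*t + m) p)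
        = v0 + t • (v1 - v0) from by module,
      show (k • rotC2 (k*t + m) (genC2 p)) + ((v1 - v0) - k • rotC2 (k*t + m) (genC2 p))
        = v1 - v0 from by module]
  rw [htop] at key
  rw [segInt]
  linarith [key]


/-- Let B ⊂ ℂ² be an open ball around the fixed point 0 of the diagonal circle
action, Pol a closed set, and ϑ a closed, invariant 1-form on B \ Pol with
theta(X) = 1.  Then for any p ∈ B \ Pol the integral of ϑ over the circle orbit
through p equals 2π; consequently any loop tracing this orbit is not
null-homotopic in B \ Pol, and in particular Pol is nonempty. -/
theorem orbit_integral_eq_two_pi_and_not_nullhomotopic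
    (r : ℝ) (hr : 0 < r) (Pol : Set (ℂ × ℂ)) (hPol : IsClosed Pol)
    (B : Set (ℂ × ℂ)) (hB : B = Metric.ball (0 : ℂ × ℂ) r)
    (ϑ : (ℂ × ℂ) → (ℂ × ℂ) →L[ℝ] ℝ)
    -- the domain B \ Pol is invariant under the action:
    (hdominv : ∀ (t : ℝ) (x : ℂ × ℂ), x ∈ B \ Pol → rotC2 t x ∈ B \ Pol)
    -- ϑ is invariant under the action:
    (hforminv : ∀ (t : ℝ) (x v : ℂ × ℂ), x ∈ B \ Pol →
      ϑ (rotC2 t x) (Complex.exp (t * Complex.I) * v.1,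
        Complex.exp (t * Complex.I) * v.2) = ϑ x v)
    -- ϑ is closed on B \ Pol:
    (hϑdiff : DifferentiableOn ℝ ϑ (B \ Pol))
    (hclosed : ∀ x ∈ B \ Pol, ∀ v w : ℂ × ℂ,
      fderiv ℝ ϑ x v w = fderiv ℝ ϑ x w v)
    -- theta(X) = 1 on B \ Pol:
    (hpair : ∀ x ∈ B \ Pol, ϑ x (genC2 x) = 1)
    (p : ℂ × ℂ) (hp : p ∈ B \ Pol) (hp0 : p ≠ 0) :
    (∫ t in (0:ℝ)..(2 * π), ϑ (rotC2 t p) (genC2 (rotC2 t p))) = 2 * π ∧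
    (∀ loop : Path (X := {x : ℂ × ℂ // x ∈ B \ Pol}) ⟨p, hp⟩ ⟨p, hp⟩,
      (∀ s : unitInterval, (loop s : ℂ × ℂ) = rotC2 (2 * π * s) p) →
      ¬ loop.Homotopic (Path.refl (⟨p, hp⟩ : {x : ℂ × ℂ // x ∈ B \ Pol}))) ∧
    Pol.Nonempty := by
  have hUo : IsOpen (B \ Pol) := by
    rw [hB]; exact Metric.isOpen_ball.sdiff hPol
  have pair1 : ∀ T : ℝ, ϑ (rotC2 T p) (genC2 (rotC2 T p)) = 1 := by
    intro T
    have hg : genC2 (rotC2 T p) = (Complex.exp (T * Complex.I) * (genC2 p).1,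
        Complex.exp (T * Complex.I) * (genC2 p).2) := by
      simp only [genC2, rotC2]
      exact Prod.ext (by ring) (by ring)
    rw [hg, hforminv T p (genC2 p) hp]
    exact hpair p hp
  have part1 : (∫ t in (0:ℝ)..(2 * π), ϑ (rotC2 t p) (genC2 (rotC2 t p))) = 2 * π := by
    rw [intervalIntegral.integral_congr (g := fun _ => (1:ℝ)) (fun t _ => pair1 t)]
    simp
  have part2 : ∀ loop : Path (X := {x : ℂ × ℂ // x ∈ B \ Pol}) ⟨p, hp⟩ ⟨p, hp⟩,
      (∀ s : unitInterval, (loop s : ℂ × ℂ) = rotC2 (2 * π * s) p) →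
      ¬ loop.Homotopic (Path.refl (⟨p, hp⟩ : {x : ℂ × ℂ // x ∈ B \ Pol})) := by
    intro loop hloop hcon
    obtain ⟨H⟩ := hcon
    set G : ℝ × ℝ → ℂ × ℂ := fun q =>
      (H (Set.projIcc 0 1 zero_le_one q.1, Set.projIcc 0 1 zero_le_one q.2) : ℂ × ℂ) with hGdef
    have hGc : Continuous G :=
      continuous_subtype_val.comp (H.continuous.comp
        (continuous_projIcc.prodMap continuous_projIcc))
    have hGmem : ∀ q : ℝ × ℝ, G q ∈ B \ Pol := fun q => (H _).2
    have ecoe : ∀ s ∈ Icc (0:ℝ) 1, ((Set.projIcc (0:ℝ) 1 zero_le_one s : unitInterval) : ℝ) = s := by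
      intro s hs
      rw [Set.coe_projIcc, min_eq_right hs.2, max_eq_right hs.1]
    have e0 : Set.projIcc (0:ℝ) 1 zero_le_one 0 = 0 :=
      Subtype.ext (by rw [ecoe 0 ⟨le_refl 0, zero_le_one⟩]; rfl)
    have e1 : Set.projIcc (0:ℝ) 1 zero_le_one 1 = 1 :=
      Subtype.ext (by rw [ecoe 1 ⟨zero_le_one, le_refl 1⟩]; rfl)
    have hside0 : ∀ t : unitInterval, H (t, 0) = ⟨p, hp⟩ := by
      intro t
      have h := H.eq_fst t (Set.mem_insert 0 {1})
      rw [h]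
      exact loop.source
    have hside1 : ∀ t : unitInterval, H (t, 1) = ⟨p, hp⟩ := by
      intro t
      have h := H.eq_fst t (Set.mem_insert_of_mem _ rfl)
      rw [h]
      exact loop.target
    have hG0 : ∀ s ∈ Icc (0:ℝ) 1, G (0, s) = rotC2 (2 * π * s) p := by
      intro s hs
      show (H (Set.projIcc 0 1 zero_le_one 0, Set.projIcc 0 1 zero_le_one s) : ℂ × ℂ)
        = rotC2 (2 * π * s) p
      rw [e0]
      rw [show H ((0 : unitInterval), Set.projIcc 0 1 zero_le_one s)
          = loop (Set.projIcc 0 1 zero_le_one s) from H.apply_zero _]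
      rw [hloop, ecoe s hs]
    have hG1 : ∀ s : ℝ, G (1, s) = p := by
      intro s
      show (H (Set.projIcc 0 1 zero_le_one 1, Set.projIcc 0 1 zero_le_one s) : ℂ × ℂ) = p
      rw [e1]
      rw [show H ((1 : unitInterval), Set.projIcc 0 1 zero_le_one s)
          = Path.refl (⟨p, hp⟩ : {x : ℂ × ℂ // x ∈ B \ Pol}) (Set.projIcc 0 1 zero_le_one s)
          from H.apply_one _]
      rfl
    have hGt0 : ∀ t : ℝ, G (t, 0) = p := by
      intro t
      show (H (Set.projIcc 0 1 zero_le_one t, Set.projIcc 0 1 zero_le_one 0) : ℂ × ℂ) = p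
      rw [e0, hside0]
    have hGt1 : ∀ t : ℝ, G (t, 1) = p := by
      intro t
      show (H (Set.projIcc 0 1 zero_le_one t, Set.projIcc 0 1 zero_le_one 1) : ℂ × ℂ) = p
      rw [e1, hside1]
    -- compactness and uniform continuity
    have hK : IsCompact (G '' (Icc (0:ℝ) 1 ×ˢ Icc (0:ℝ) 1)) :=
      (isCompact_Icc.prod isCompact_Icc).image hGc
    have hKU : G '' (Icc (0:ℝ) 1 ×ˢ Icc (0:ℝ) 1) ⊆ B \ Pol := by
      rintro x ⟨q, _, rfl⟩; exact hGmem q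
    obtain ⟨δ, hδ0, hδsub⟩ := hK.exists_thickening_subset_open hUo hKU
    have hball : ∀ x ∈ G '' (Icc (0:ℝ) 1 ×ˢ Icc (0:ℝ) 1), Metric.ball x δ ⊆ B \ Pol := by
      intro x hx y hy
      exact hδsub (Metric.mem_thickening_iff.2 ⟨x, hx, Metric.mem_ball.1 hy⟩)
    have hucG : UniformContinuous G := by
      have h1 : UniformContinuous (fun q : unitInterval × unitInterval => (H q : ℂ × ℂ)) :=
        CompactSpace.uniformContinuous_of_continuous
          (continuous_subtype_val.comp H.continuous)
      exact h1.comp (((LipschitzWith.projIcc zero_le_one).uniformContinuous).prodMap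
        ((LipschitzWith.projIcc zero_le_one).uniformContinuous))
    rw [Metric.uniformContinuous_iff] at hucG
    obtain ⟨ε, hε0, hεG⟩ := hucG δ hδ0
    obtain ⟨n, hn⟩ := exists_nat_one_div_lt hε0
    set N : ℕ := n + 1 with hNdef
    have hNpos : (0:ℝ) < N := by positivity
    have hclose : ∀ u v : ℝ × ℝ, dist u v ≤ 1 / N → dist (G u) (G v) < δ := by
      intro u v h
      refine hεG (lt_of_le_of_lt h ?_)
      have : ((N:ℝ)) = (n:ℝ) + 1 := by push_cast [hNdef]; ring
      rw [this]; exact hn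
    have hmemIcc : ∀ i : ℕ, i ≤ N → (i:ℝ)/N ∈ Icc (0:ℝ) 1 := by
      intro i hi
      constructor
      · positivity
      · rw [div_le_one hNpos]; exact_mod_cast hi
    have hvK : ∀ i j : ℕ, i ≤ N → j ≤ N →
        G ((i:ℝ)/N, (j:ℝ)/N) ∈ G '' (Icc (0:ℝ) 1 ×ˢ Icc (0:ℝ) 1) :=
      fun i j hi hj => Set.mem_image_of_mem _ ⟨hmemIcc i hi, hmemIcc j hj⟩
    set w : ℕ → ℕ → ℂ × ℂ := fun i j => G ((i:ℝ)/N, (j:ℝ)/N) with hwdef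
    have hdistcoord : ∀ i i' : ℕ, i ≤ i' → i' ≤ i + 1 → dist ((i':ℝ)/N) ((i:ℝ)/N) ≤ 1/N := by
      intro i i' h1 h2
      have hge : (0:ℝ) ≤ (i':ℝ) - i := by
        have : (i:ℝ) ≤ (i':ℝ) := by exact_mod_cast h1
        linarith
      have hle : (i':ℝ) - i ≤ 1 := by
        have : (i':ℝ) ≤ (i:ℝ) + 1 := by exact_mod_cast h2
        linarith
      rw [Real.dist_eq, show (i':ℝ)/N - (i:ℝ)/N = ((i':ℝ) - i)/N from by ring,
        _root_.abs_of_nonneg (div_nonneg hge hNpos.le)]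
      gcongr
    have hmemball : ∀ i j i' j' : ℕ, i ≤ i' → i' ≤ i + 1 → j ≤ j' → j' ≤ j + 1 →
        w i' j' ∈ Metric.ball (w i j) δ := by
      intro i j i' j' h1 h2 h3 h4
      refine Metric.mem_ball.2 (hclose _ _ ?_)
      rw [Prod.dist_eq]
      exact max_le (hdistcoord i i' h1 h2) (hdistcoord j j' h3 h4)
    set R : ℕ → ℝ := fun i =>
      ∑ j ∈ Finset.range N, segInt ϑ (w i j) (w i (j+1)) with hRdef
    have hA : ∀ i, i < N → R (i+1) = R i := by
      intro i hi
      have hsq : ∀ j, j < N →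
          segInt ϑ (w (i+1) j) (w (i+1) (j+1)) - segInt ϑ (w i j) (w i (j+1))
            = segInt ϑ (w i (j+1)) (w (i+1) (j+1)) - segInt ϑ (w i j) (w (i+1) j) := by
        intro j hj
        have hsquare := segInt_square (B \ Pol) hUo ϑ hϑdiff hclosed
          (convex_ball (w i j) δ) (hball _ (hvK i j hi.le hj.le))
          (Metric.mem_ball_self hδ0)
          (hmemball i j i (j+1) le_rfl (Nat.le_succ i) (Nat.le_succ j) le_rfl)
          (hmemball i j (i+1) j (Nat.le_succ i) le_rfl le_rfl (Nat.le_succ j))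
          (hmemball i j (i+1) (j+1) (Nat.le_succ i) le_rfl (Nat.le_succ j) le_rfl)
        linarith [hsquare]
      have htel : R (i+1) - R i = ∑ j ∈ Finset.range N,
          (segInt ϑ (w i (j+1)) (w (i+1) (j+1)) - segInt ϑ (w i j) (w (i+1) j)) := by
        rw [hRdef]
        simp only
        rw [← Finset.sum_sub_distrib]
        exact Finset.sum_congr rfl fun j hj => hsq j (Finset.mem_range.1 hj)
      rw [Finset.sum_range_sub (f := fun j => segInt ϑ (w i j) (w (i+1) j))] at htel
      have hNN : ((N:ℕ):ℝ)/N = 1 := div_self hNpos.ne'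
      have hz1 : w i N = p := by rw [hwdef]; simp only; rw [hNN]; exact hGt1 _
      have hz2 : w (i+1) N = p := by rw [hwdef]; simp only; rw [hNN]; exact hGt1 _
      have hz3 : w i 0 = p := by
        rw [hwdef]; simp only [Nat.cast_zero, zero_div]; exact hGt0 _
      have hz4 : w (i+1) 0 = p := by
        rw [hwdef]; simp only [Nat.cast_zero, zero_div]; exact hGt0 _
      rw [hz1, hz2, hz3, hz4, segInt_self] at htel
      linarith [htel]
    have hRN : R N = 0 := by
      rw [hRdef]
      refine Finset.sum_eq_zero fun j hj => ?_
      have hNN : ((N:ℕ):ℝ)/N = 1 := div_self hNpos.ne'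
      have hz1 : w N j = p := by rw [hwdef]; simp only; rw [hNN]; exact hG1 _
      have hz2 : w N (j+1) = p := by rw [hwdef]; simp only; rw [hNN]; exact hG1 _
      rw [hz1, hz2, segInt_self]
    have hR0 : R 0 = 2 * π := by
      have hterm : ∀ j, j < N → segInt ϑ (w 0 j) (w 0 (j+1)) = 2*π/N := by
        intro j hj
        have hj1 : ((j:ℝ) + 1) ≤ N := by exact_mod_cast Nat.succ_le_of_lt hj
        have hw0 : ∀ u : ℝ, 0 ≤ u → (j:ℝ) + u ≤ N →
            rotC2 ((2*π/N)*u + 2*π*j/N) p = G (0, ((j:ℝ)+u)/N) := by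
          intro u hu0 huN
          rw [hG0 (((j:ℝ)+u)/N) ⟨by positivity, by rw [div_le_one hNpos]; exact huN⟩]
          congr 1
          field_simp
          ring
        have hmemC : ∀ t ∈ Icc (0:ℝ) 1,
            rotC2 ((2*π/N)*t + 2*π*(j:ℝ)/N) p ∈ Metric.ball (w 0 j) δ := by
          intro t ht
          rw [hw0 t ht.1 (by linarith [ht.2])]
          have hwj : w 0 j = G (0, (j:ℝ)/N) := by
            rw [hwdef]; simp only [Nat.cast_zero, zero_div]
          rw [hwj]
          refine Metric.mem_ball.2 (hclose _ _ ?_)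
          rw [Prod.dist_eq]
          refine max_le (by simp) ?_
          rw [Real.dist_eq, show ((j:ℝ)+t)/N - (j:ℝ)/N = t/N from by ring,
            _root_.abs_of_nonneg (div_nonneg ht.1 hNpos.le)]
          gcongr
          exact ht.2
        have harc := segInt_arc (B \ Pol) hUo ϑ hϑdiff hclosed p pair1
          (2*π/N) (2*π*(j:ℝ)/N) (convex_ball (w 0 j) δ)
          (hball _ (hvK 0 j (Nat.zero_le _) hj.le)) hmemC
        have hwj : w 0 j = rotC2 (2*π*(j:ℝ)/N) p := by
          have := hw0 0 le_rfl (by linarith)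
          rw [hwdef]; simp only [Nat.cast_zero, zero_div]
          rw [show (2*π/N)*0 + 2*π*(j:ℝ)/N = 2*π*(j:ℝ)/N from by ring] at this
          rw [this]
          norm_num
        have hwj1 : w 0 (j+1) = rotC2 (2*π/N + 2*π*(j:ℝ)/N) p := by
          have := hw0 1 zero_le_one hj1
          rw [hwdef]; simp only [Nat.cast_zero, zero_div]
          rw [show (2*π/N)*1 + 2*π*(j:ℝ)/N = 2*π/N + 2*π*(j:ℝ)/N from by ring] at this
          rw [this]
          push_cast
          norm_num
        rw [hwj, hwj1]
        exact harc
      rw [hRdef]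
      simp only
      rw [Finset.sum_congr rfl (fun j hj => hterm j (Finset.mem_range.1 hj))]
      rw [Finset.sum_const, Finset.card_range, nsmul_eq_mul]
      field_simp
    have hind : ∀ i, i ≤ N → R i = R 0 := by
      intro i
      induction i with
      | zero => intro _; rfl
      | succ k ih =>
        intro hk
        rw [hA k (by omega), ih (by omega)]
    have hcontr := hind N le_rfl
    rw [hRN, hR0] at hcontr
    have := Real.pi_pos
    linarith
  refine ⟨part1, part2, ?_⟩
  by_contra hne
  rw [Set.not_nonempty_iff_eq_empty] at hne
  subst hne
  have hconv : Convex ℝ (B \ (∅ : Set (ℂ × ℂ))) := by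
    rw [Set.diff_empty, hB]; exact convex_ball 0 r
  haveI : ContractibleSpace {x : ℂ × ℂ // x ∈ B \ (∅ : Set (ℂ × ℂ))} :=
    hconv.contractibleSpace ⟨p, hp⟩
  have hcont : Continuous (fun s : unitInterval =>
      (⟨rotC2 (2*π*(s:ℝ)) p, hdominv _ p hp⟩ : {x : ℂ × ℂ // x ∈ B \ (∅ : Set (ℂ × ℂ))})) := by
    refine Continuous.subtype_mk ?_ _
    have hcr : Continuous (fun s : ℝ => rotC2 (2*π*s) p) := by
      unfold rotC2
      apply Continuous.prodMk <;>
        exact (Complex.continuous_exp.comp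
          ((Complex.continuous_ofReal.comp (continuous_const.mul continuous_id)).mul
            continuous_const)).mul continuous_const
    exact hcr.comp continuous_subtype_val
  set γ : Path (X := {x : ℂ × ℂ // x ∈ B \ (∅ : Set (ℂ × ℂ))}) ⟨p, hp⟩ ⟨p, hp⟩ :=
    { toFun := fun s => ⟨rotC2 (2*π*(s:ℝ)) p, hdominv _ p hp⟩
      continuous_toFun := hcont
      source' := by
        refine Subtype.ext ?_
        show rotC2 (2*π*((0 : unitInterval):ℝ)) p = p
        simp [rotC2]
      target' := by
        refine Subtype.ext ?_
        show rotC2 (2*π*((1 : unitInterval):ℝ)) p = p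
        have : ((2*π*((1 : unitInterval):ℝ) : ℝ) : ℂ) * Complex.I = 2*π*Complex.I := by
          push_cast
          ring
        simp only [rotC2, this, Complex.exp_two_pi_mul_I, one_mul] } with hγdef
  exact part2 γ (fun s => rfl) (SimplyConnectedSpace.paths_homotopic γ (Path.refl _))
end
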